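/- Let f : ℝ → ℝ be continuous and let ε > 0, and let [a,b] be a compact interval. Then there exist M ∈ ℕ, real numbers w₁,...,w_M, β₁,...,β_M, γ₁,...,γ_M, and a bias β₀ such that sup_{x ∈ [a,b]} |f(x) − (β₀ + Σ_{m=1}^{M} w_m·σ(β_m·x + γ_m))| < ε, where σ denotes the ReLU function σ(z) = max(z, 0). -/

import Mathlib

lemma sum_range_two_mul_pair (n : ℕ) (t : ℕ → ℝ) :
    ∑ m ∈ Finset.range (2 * n), t m
      = ∑ j ∈ Finset.range n, (t (2 * j) + t (2 * j + 1)) := by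
  induction n with
  | zero => simp
  | succ n ih =>
      have h2 : 2 * (n + 1) = (2 * n + 1) + 1 := by ring
      rw [h2, Finset.sum_range_succ, Finset.sum_range_succ, ih,
        Finset.sum_range_succ]
      ring

/-- One-hidden-layer ReLU networks are universal approximators on a
compact interval: for continuous `f` and `ε > 0` there are `M`,
weights `w`, `β`, `γ` and a bias `β₀` with
`sup_{x ∈ [a,b]} |f x - (β₀ + Σ_m w_m · max (β_m x + γ_m) 0)| < ε`. -/
theorem relu_universal_approx
    (f : ℝ → ℝ) (hf : Continuous f) (ε : ℝ) (hε : 0 < ε)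
    (a b : ℝ) (hab : a ≤ b) :
    ∃ (M : ℕ) (w β γ : ℕ → ℝ) (β₀ : ℝ),
      ∀ x ∈ Set.Icc a b,
        |f x - (β₀ + ∑ m ∈ Finset.range M, w m * max (β m * x + γ m) 0)| < ε := by
  rcases eq_or_lt_of_le hab with rfl | hlt
  · refine ⟨0, 0, 0, 0, f a, ?_⟩
    intro x hx
    have hx' : x = a := le_antisymm hx.2 hx.1
    simp [hx', hε]
  -- uniform continuity on the compact interval
  have hc : UniformContinuousOn f (Set.Icc a b) :=
    isCompact_Icc.uniformContinuousOn_of_continuous hf.continuousOn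
  obtain ⟨δ, hδ, hδf⟩ := Metric.uniformContinuousOn_iff.mp hc (ε / 3) (by linarith)
  obtain ⟨n, hn⟩ := exists_nat_gt ((b - a) / δ)
  have hn0 : 0 < (n : ℝ) := lt_trans (div_pos (by linarith) hδ) hn
  have hn1 : 1 ≤ n := by
    have : 0 < n := by exact_mod_cast hn0
    omega
  set h : ℝ := (b - a) / n with hh_def
  have hh : 0 < h := div_pos (by linarith) hn0
  have hhδ : h < δ := by
    rw [hh_def, div_lt_iff₀ hn0]
    have := (div_lt_iff₀ hδ).mp hn
    nlinarith
  have hnh : (n : ℝ) * h = b - a := by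
    rw [hh_def]
    field_simp [hn0.ne']
  set xx : ℕ → ℝ := fun j => a + j * h with hxx
  set s : ℕ → ℝ := fun j => (f (xx (j + 1)) - f (xx j)) / h with hs
  refine ⟨2 * n,
    (fun m => if Even m then s (m / 2) else -(s (m / 2))),
    (fun _ => 1),
    (fun m => if Even m then -(xx (m / 2)) else -(xx (m / 2 + 1))),
    f a, ?_⟩
  intro x hx
  obtain ⟨hax, hxb⟩ := hx
  -- rewrite the sum as a sum over segments
  have hpair : ∑ m ∈ Finset.range (2 * n),
      (if Even m then s (m / 2) else -(s (m / 2))) *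
        max ((1 : ℝ) * x + (if Even m then -(xx (m / 2)) else -(xx (m / 2 + 1)))) 0
      = ∑ j ∈ Finset.range n,
          s j * (max (x - xx j) 0 - max (x - xx (j + 1)) 0) := by
    rw [sum_range_two_mul_pair]
    refine Finset.sum_congr rfl fun j _ => ?_
    have he : Even (2 * j) := even_two_mul j
    have ho : ¬ Even (2 * j + 1) := by
      rw [Nat.even_iff]; omega
    have hd1 : 2 * j / 2 = j := by omega
    have hd2 : (2 * j + 1) / 2 = j := by omega
    rw [if_pos he, if_pos he, if_neg ho, if_neg ho, hd1, hd2]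
    ring_nf
  rw [hpair]
  -- locate x in its segment
  set k : ℕ := ⌊(x - a) / h⌋₊ with hk
  set i : ℕ := min k (n - 1) with hi
  have hin : i < n := by omega
  have hcast : ((n - 1 : ℕ) : ℝ) = (n : ℝ) - 1 := by
    rw [Nat.cast_sub hn1]; norm_num
  have hxi_le : xx i ≤ x := by
    have h1 : (i : ℝ) ≤ k := by exact_mod_cast Nat.cast_le.mpr (min_le_left _ _)
    have h2 : (k : ℝ) ≤ (x - a) / h := Nat.floor_le (div_nonneg (by linarith) hh.le)
    have : (i : ℝ) * h ≤ (x - a) / h * h := by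
      apply mul_le_mul_of_nonneg_right (h1.trans h2) hh.le
    rw [div_mul_cancel₀ _ hh.ne'] at this
    simp only [hxx]; linarith
  have hle_xi1 : x ≤ xx (i + 1) := by
    rcases le_or_gt k (n - 1) with hkn | hkn
    · have hik : i = k := min_eq_left hkn
      have h2 : (x - a) / h < k + 1 := Nat.lt_floor_add_one _
      have : x - a < ((k : ℝ) + 1) * h := by
        have := mul_lt_mul_of_pos_right h2 hh
        rwa [div_mul_cancel₀ _ hh.ne'] at this
      simp only [hxx, hik]
      push_cast
      linarith
    · have hik : i = n - 1 := min_eq_right hkn.le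
      have : xx (i + 1) = b := by
        simp only [hxx, hik]
        push_cast [hcast]
        linarith [hnh]
      rw [this]; exact hxb
  -- grid points lie in [a,b]
  have hxx_mem : ∀ j : ℕ, j ≤ n → xx j ∈ Set.Icc a b := by
    intro j hj
    constructor
    · simp only [hxx]; nlinarith [hh.le, (Nat.cast_nonneg j : (0:ℝ) ≤ j)]
    · simp only [hxx]
      have : (j : ℝ) ≤ n := by exact_mod_cast hj
      nlinarith
  -- evaluate the sum
  have hsum : ∑ j ∈ Finset.range n,
      s j * (max (x - xx j) 0 - max (x - xx (j + 1)) 0)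
      = f (xx i) - f a + s i * (x - xx i) := by
    have hsplit := Finset.sum_range_add_sum_Ico
      (fun j => s j * (max (x - xx j) 0 - max (x - xx (j + 1)) 0))
      (Nat.succ_le_of_lt hin)
    rw [← hsplit, Finset.sum_range_succ]
    have hmono : ∀ j₁ j₂ : ℕ, j₁ ≤ j₂ → xx j₁ ≤ xx j₂ := by
      intro j₁ j₂ hj
      simp only [hxx]
      have : (j₁ : ℝ) ≤ j₂ := by exact_mod_cast hj
      nlinarith
    have htail : ∑ j ∈ Finset.Ico (i + 1) n,
        s j * (max (x - xx j) 0 - max (x - xx (j + 1)) 0) = 0 := by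
      apply Finset.sum_eq_zero
      intro j hj
      have hj1 : i + 1 ≤ j := (Finset.mem_Ico.mp hj).1
      have hxj : x ≤ xx j := hle_xi1.trans (hmono _ _ hj1)
      have hxj1 : x ≤ xx (j + 1) := hxj.trans (hmono _ _ (Nat.le_succ j))
      rw [max_eq_right (by linarith), max_eq_right (by linarith)]
      ring
    have hmid : s i * (max (x - xx i) 0 - max (x - xx (i + 1)) 0)
        = s i * (x - xx i) := by
      rw [max_eq_left (by linarith), max_eq_right (by linarith)]; ring
    have hinit : ∑ j ∈ Finset.range i,
        s j * (max (x - xx j) 0 - max (x - xx (j + 1)) 0)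
        = f (xx i) - f a := by
      have heach : ∀ j ∈ Finset.range i,
          s j * (max (x - xx j) 0 - max (x - xx (j + 1)) 0)
          = f (xx (j + 1)) - f (xx j) := by
        intro j hj
        have hj' : j < i := Finset.mem_range.mp hj
        have h1 : xx (j + 1) ≤ x := (hmono _ _ (Nat.succ_le_of_lt hj')).trans hxi_le
        have h2 : xx j ≤ x := (hmono _ _ (Nat.le_succ j)).trans h1
        rw [max_eq_left (by linarith), max_eq_left (by linarith)]
        have hdiff : (x - xx j) - (x - xx (j + 1)) = h := by
          simp only [hxx]; push_cast; ring
        rw [hdiff, hs]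
        field_simp
      rw [Finset.sum_congr rfl heach, Finset.sum_range_sub (fun j => f (xx j))]
      simp [hxx]
    rw [htail, hmid, hinit]
    ring
  rw [hsum]
  -- the error bounds
  have hi_mem : xx i ∈ Set.Icc a b := hxx_mem i hin.le
  have hi1_mem : xx (i + 1) ∈ Set.Icc a b := hxx_mem (i + 1) hin
  have hstep : xx (i + 1) - xx i = h := by
    simp only [hxx]; push_cast; ring
  have hxh : x - xx i ≤ h := by linarith
  have e1 : |f x - f (xx i)| < ε / 3 := by
    have := hδf x ⟨hax, hxb⟩ (xx i) hi_mem
      (by rw [Real.dist_eq, abs_of_nonneg (by linarith)]; linarith)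
    rwa [Real.dist_eq] at this
  have e2 : |f (xx (i + 1)) - f (xx i)| < ε / 3 := by
    have := hδf (xx (i + 1)) hi1_mem (xx i) hi_mem
      (by rw [Real.dist_eq, hstep, abs_of_pos hh]; exact hhδ)
    rwa [Real.dist_eq] at this
  have e3 : |s i * (x - xx i)| ≤ |f (xx (i + 1)) - f (xx i)| := by
    rw [abs_mul, abs_of_nonneg (show (0:ℝ) ≤ x - xx i by linarith)]
    have h1 : |s i| = |f (xx (i + 1)) - f (xx i)| / h := by
      rw [hs]; rw [abs_div, abs_of_pos hh]
    rw [h1]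
    calc |f (xx (i + 1)) - f (xx i)| / h * (x - xx i)
        ≤ |f (xx (i + 1)) - f (xx i)| / h * h :=
          mul_le_mul_of_nonneg_left hxh (div_nonneg (abs_nonneg _) hh.le)
      _ = _ := div_mul_cancel₀ _ hh.ne'
  have key : f x - (f a + (f (xx i) - f a + s i * (x - xx i)))
      = (f x - f (xx i)) - s i * (x - xx i) := by ring
  rw [key]
  calc |(f x - f (xx i)) - s i * (x - xx i)|
      ≤ |f x - f (xx i)| + |s i * (x - xx i)| := abs_sub _ _
    _ < ε / 3 + ε / 3 := by
        apply add_lt_add_of_lt_of_le e1 (e3.trans_lt e2).le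
    _ < ε := by linarith
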